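/- The function g(t) = (t+1)^c − 2·t^c − 1, where c = log₂ 3, is nonnegative for all t ∈ [0, 1]. -/

import Mathlib

open Real Set

theorem stmt1 (t : ℝ) (ht : t ∈ Set.Icc (0:ℝ) 1) :
    0 ≤ (t + 1) ^ Real.logb 2 3 - 2 * t ^ Real.logb 2 3 - 1 := by
  set c := Real.logb 2 3 with hc
  have hc1 : 1 < c := by
    rw [hc, Real.lt_logb_iff_rpow_lt (by norm_num) (by norm_num)]
    norm_num
  have hc0 : 0 < c := lt_trans one_pos hc1
  have hc2 : c ≤ 2 := by
    rw [hc, Real.logb_le_iff_le_rpow (by norm_num) (by norm_num)]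
    rw [show (2:ℝ) = ((2:ℕ):ℝ) by norm_num]
    rw [Real.rpow_natCast]
    norm_num
  set f : ℝ → ℝ := fun x => (x + 1) ^ c - 2 * x ^ c - 1 with hf
  set f' : ℝ → ℝ := fun x => c * (x + 1) ^ (c - 1) - 2 * (c * x ^ (c - 1)) with hf'
  set f'' : ℝ → ℝ := fun x => (c - 1) * c * (x + 1) ^ (c - 2) - 2 * ((c - 1) * c * x ^ (c - 2)) with hf''
  have hint : interior (Icc (0:ℝ) 1) = Ioo 0 1 := interior_Icc
  have hconc : ConcaveOn ℝ (Icc (0:ℝ) 1) f := by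
    apply concaveOn_of_hasDerivWithinAt2_nonpos (convex_Icc 0 1)
    · -- continuity
      apply ContinuousOn.sub
      apply ContinuousOn.sub
      · exact ((continuous_id.add continuous_const).rpow_const
          (fun x => Or.inr hc0.le)).continuousOn
      · exact (continuous_const.mul (continuous_id.rpow_const
          (fun x => Or.inr hc0.le))).continuousOn
      · exact continuousOn_const
    · intro x hx
      rw [hint] at hx
      have h1 : HasDerivAt (fun y : ℝ => (y + 1) ^ c) (c * (x + 1) ^ (c - 1) * 1) x := by
        exact (Real.hasDerivAt_rpow_const (Or.inl (by intro h; nlinarith [hx.1]))).comp x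
          ((hasDerivAt_id x).add_const 1)
      have h2 : HasDerivAt (fun y : ℝ => y ^ c) (c * x ^ (c - 1)) x :=
        Real.hasDerivAt_rpow_const (Or.inl (ne_of_gt hx.1))
      have := ((h1.sub (h2.const_mul 2)).sub_const 1)
      simpa [hf, hf', mul_comm] using this.hasDerivWithinAt
    · intro x hx
      rw [hint] at hx
      have h1 : HasDerivAt (fun y : ℝ => (y + 1) ^ (c - 1)) ((c - 1) * (x + 1) ^ (c - 1 - 1) * 1) x := by
        exact (Real.hasDerivAt_rpow_const (Or.inl (by intro h; nlinarith [hx.1]))).comp x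
          ((hasDerivAt_id x).add_const 1)
      have h2 : HasDerivAt (fun y : ℝ => y ^ (c - 1)) ((c - 1) * x ^ (c - 1 - 1)) x :=
        Real.hasDerivAt_rpow_const (Or.inl (ne_of_gt hx.1))
      have := (h1.const_mul c).sub ((h2.const_mul c).const_mul 2)
      have hsub : c - 1 - 1 = c - 2 := by ring
      rw [hsub] at this
      simpa [hf', hf'', Pi.sub_def, mul_comm, mul_assoc, mul_left_comm] using this.hasDerivWithinAt
    · intro x hx
      rw [hint] at hx
      have hk : 0 < (c - 1) * c := mul_pos (by linarith) hc0
      have hA : (x + 1) ^ (c - 2) ≤ 1 := by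
        apply Real.rpow_le_one_of_one_le_of_nonpos (by linarith [hx.1])
        linarith
      have hB : 1 ≤ x ^ (c - 2) := by
        apply Real.one_le_rpow_of_pos_of_le_one_of_nonpos hx.1 (le_of_lt hx.2)
        linarith
      show c * ((c - 1) * (x + 1) ^ (c - 2)) - 2 * (c * ((c - 1) * x ^ (c - 2))) ≤ 0
      nlinarith
  have h0 : f 0 = 0 := by
    simp [hf, Real.zero_rpow (ne_of_gt hc0), Real.one_rpow]
  have h1 : f 1 = 0 := by
    have : (2:ℝ) ^ c = 3 := Real.rpow_logb (by norm_num) (by norm_num) (by norm_num)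
    show ((1:ℝ) + 1) ^ c - 2 * (1:ℝ) ^ c - 1 = 0
    rw [show (1:ℝ)+1 = 2 by norm_num, this, Real.one_rpow]
    ring
  have := hconc.2 (left_mem_Icc.2 zero_le_one) (right_mem_Icc.2 zero_le_one)
    (by linarith [ht.2] : 0 ≤ 1 - t) ht.1 (by ring)
  simp only [smul_eq_mul, mul_zero, mul_one, zero_add] at this
  rw [h0, h1] at this
  simpa [hf] using this
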